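/- Let p > 3 be a prime, a ∈ Z/pZ with a ≠ 0, and let C_i(a) = {x ∈ X*(p) : x_i = a}. If a is parabolic (9a² − 4 = 0), then |C_i(a)| = 0 when p ≡ 3 (mod 4) and |C_i(a)| = 2p when p ≡ 1 (mod 4). If a is elliptic (9a² − 4 a nonsquare mod p), then |C_i(a)| = p + 1, and if a is hyperbolic (9a² − 4 a nonzero square mod p), then |C_i(a)| = p − 1. -/

import Mathlib

namespace Markoff

variable {R : Type*} [CommRing R]

/-- The three rotations acting on triples. -/
def rot (i : Fin 3) : R × R × R → R × R × R :=
  ![fun x => (x.1, x.2.2, 3 * x.1 * x.2.2 - x.2.1),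
    fun x => (x.2.2, x.2.1, 3 * x.2.1 * x.2.2 - x.1),
    fun x => (x.2.1, 3 * x.2.1 * x.2.2 - x.1, x.2.2)] i

/-- The `i`-th coordinate of a triple. -/
def coord (i : Fin 3) (x : R × R × R) : R := ![x.1, x.2.1, x.2.2] i

/-- The Markoff equation. -/
def IsMarkoff (x : R × R × R) : Prop :=
  x.1 ^ 2 + x.2.1 ^ 2 + x.2.2 ^ 2 = 3 * x.1 * x.2.1 * x.2.2

/-- The nonzero Markoff points mod `p`. -/
def Xstar (p : ℕ) : Set (ZMod p × ZMod p × ZMod p) :=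
  {x | IsMarkoff x ∧ x ≠ (0, 0, 0)}

/-- The rotations as permutations. -/
def rotPerm (i : Fin 3) : Equiv.Perm (R × R × R) where
  toFun := rot i
  invFun := ![fun y => (y.1, 3 * y.1 * y.2.1 - y.2.2, y.2.1),
              fun y => (3 * y.1 * y.2.1 - y.2.2, y.2.1, y.1),
              fun y => (3 * y.1 * y.2.2 - y.2.1, y.1, y.2.2)] i
  left_inv := by
    fin_cases i <;> rintro ⟨a, b, c⟩ <;>
      simp [rot, Matrix.cons_val_zero, Matrix.cons_val_one] <;> ring
  right_inv := by
    fin_cases i <;> rintro ⟨a, b, c⟩ <;>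
      simp [rot, Matrix.cons_val_zero, Matrix.cons_val_one] <;> ring

/-- The `i`-th rotation order: the least `n > 0` with `rot i ^[n] x = x`. -/
noncomputable def ordi (p : ℕ) (i : Fin 3) (x : ZMod p × ZMod p × ZMod p) : ℕ :=
  sInf {n | 0 < n ∧ (rot i)^[n] x = x}

/-- The rotation order: max of the three rotation orders. -/
noncomputable def ordp (p : ℕ) (x : ZMod p × ZMod p × ZMod p) : ℕ :=
  max (ordi p 0 x) (max (ordi p 1 x) (ordi p 2 x))

/-- The size of an integer triple. -/
def size (x : ℤ × ℤ × ℤ) : ℤ := max x.1 (max x.2.1 x.2.2)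

/-- `t` is a lift of `x` mod `p`. -/
def IsLift (p : ℕ) (t : ℤ × ℤ × ℤ) (x : ZMod p × ZMod p × ZMod p) : Prop :=
  IsMarkoff t ∧ ((t.1 : ZMod p), (t.2.1 : ZMod p), (t.2.2 : ZMod p)) = x

noncomputable def eps : ℝ := (3 + Real.sqrt 5) / 2

/-- Apply a word of rotations: `rotWord [(i₁,n₁),…,(i_s,n_s)] x = rot_{i_s}^{n_s} ⋯ rot_{i_1}^{n_1} x`. -/
def rotWord (w : List (Fin 3 × ℕ)) (x : R × R × R) : R × R × R :=
  w.foldl (fun y q => (rot q.1)^[q.2] y) x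

/-- `x` is a maximal triple. -/
def IsMax (p : ℕ) (x : ZMod p × ZMod p × ZMod p) : Prop :=
  ∃ i : Fin 3, ordi p i x = p - 1 ∨ ordi p i x = p + 1 ∨ ordi p i x = 2 * p

/-- The cage: maximal triples in `X*(p)`. -/
def Cage (p : ℕ) : Set (ZMod p × ZMod p × ZMod p) :=
  {x ∈ Xstar p | IsMax p x}

/-- The conic section `C_i(a)`. -/
def Ci (p : ℕ) (i : Fin 3) (a : ZMod p) : Set (ZMod p × ZMod p × ZMod p) :=
  {x ∈ Xstar p | coord i x = a}



open Finset in
private lemma aux_two_ne {p : ℕ} [Fact p.Prime] (hp3 : 3 < p) : (2 : ZMod p) ≠ 0 := by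
  have : ((2 : ℕ) : ZMod p) ≠ 0 := by
    rw [Ne, ZMod.natCast_eq_zero_iff]
    intro h
    exact absurd (Nat.le_of_dvd (by norm_num) h) (by omega)
  simpa using this

private lemma aux_four_ne {p : ℕ} [Fact p.Prime] (hp3 : 3 < p) : (4 : ZMod p) ≠ 0 := by
  have h2 := aux_two_ne (p := p) hp3
  have : (4 : ZMod p) = 2 * 2 := by norm_num
  rw [this]
  exact mul_ne_zero h2 h2

open Finset in
private lemma aux_card_sqrt_sq {p : ℕ} [Fact p.Prime] (hp3 : 3 < p) (b : ZMod p) (hb : b ≠ 0) :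
    (univ.filter fun x : ZMod p => x ^ 2 = b ^ 2).card = 2 := by
  have h2 := aux_two_ne (p := p) hp3
  have hbb : b ≠ -b := by
    intro h
    apply hb
    have : (2 : ZMod p) * b = 0 := by linear_combination h
    rcases mul_eq_zero.1 this with h' | h'
    · exact absurd h' h2
    · exact h'
  have : (univ.filter fun x : ZMod p => x ^ 2 = b ^ 2) = {b, -b} := by
    ext x
    simp only [mem_filter, mem_univ, true_and, mem_insert, mem_singleton]
    constructor
    · intro h
      have : (x - b) * (x + b) = 0 := by linear_combination h
      rcases mul_eq_zero.1 this with h' | h'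
      · left; exact sub_eq_zero.1 h'
      · right; exact eq_neg_of_add_eq_zero_left h'
    · rintro (rfl | rfl) <;> ring
  rw [this]
  rw [card_insert_of_notMem (by simpa using hbb), card_singleton]

open Finset in
private lemma aux_card_sqrt_nonsquare {p : ℕ} [Fact p.Prime] (c : ZMod p) (hc : ¬ IsSquare c) :
    (univ.filter fun x : ZMod p => x ^ 2 = c).card = 0 := by
  rw [Finset.card_eq_zero, Finset.filter_eq_empty_iff]
  intro x _ h
  exact hc ⟨x, by rw [← h]; ring⟩

open Finset in
private lemma aux_card_hyperbola {p : ℕ} [Fact p.Prime] (c : ZMod p) (hc : c ≠ 0) :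
    (univ.filter fun z : ZMod p × ZMod p => z.1 * z.2 = c).card = p - 1 := by
  have h := Finset.card_nbij' (s := univ.filter fun z : ZMod p × ZMod p => z.1 * z.2 = c)
    (t := (univ : Finset (ZMod p)).erase 0)
    (fun z => z.1) (fun u => (u, c / u))
    (by
      rintro ⟨u, v⟩ hz
      simp only [mem_coe, mem_filter, mem_univ, true_and] at hz
      simp only [mem_coe, mem_erase, mem_univ, and_true]
      rintro rfl
      rw [zero_mul] at hz
      exact hc hz.symm)
    (by
      intro u hu
      simp only [mem_coe, mem_erase, mem_univ, and_true] at hu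
      simp only [mem_coe, mem_filter, mem_univ, true_and]
      exact mul_div_cancel₀ c hu)
    (by
      rintro ⟨u, v⟩ hz
      simp only [mem_coe, mem_filter, mem_univ, true_and] at hz
      have hu : u ≠ 0 := by rintro rfl; rw [zero_mul] at hz; exact hc hz.symm
      have : c / u = v := by field_simp [hu]; linear_combination -hz
      simp [this])
    (by intro u hu; rfl)
  rw [h, Finset.card_erase_of_mem (mem_univ 0), Finset.card_univ, ZMod.card]

open Finset in
private def Mcard (p : ℕ) [Fact p.Prime] (D c : ZMod p) : ℕ :=
  (univ.filter fun z : ZMod p × ZMod p => z.1 ^ 2 - D * z.2 ^ 2 = c).card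

open Finset in
private lemma Mcard_mul {p : ℕ} [Fact p.Prime] (D s₀ y₀ c : ZMod p)
    (he : s₀ ^ 2 - D * y₀ ^ 2 ≠ 0) :
    Mcard p D c = Mcard p D ((s₀ ^ 2 - D * y₀ ^ 2) * c) := by
  set e := s₀ ^ 2 - D * y₀ ^ 2 with hedef
  apply Finset.card_nbij'
    (i := fun z : ZMod p × ZMod p => (z.1 * s₀ + D * z.2 * y₀, z.1 * y₀ + s₀ * z.2))
    (j := fun w : ZMod p × ZMod p => ((w.1 * s₀ - D * w.2 * y₀) / e, (w.2 * s₀ - w.1 * y₀) / e))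
  · rintro ⟨s, y⟩ hz
    simp only [mem_coe, mem_filter, mem_univ, true_and] at hz ⊢
    linear_combination (s₀ ^ 2 - D * y₀ ^ 2) * hz
  · rintro ⟨u, v⟩ hw
    simp only [mem_coe, mem_filter, mem_univ, true_and] at hw ⊢
    field_simp
    linear_combination e * hw
  · rintro ⟨s, y⟩ hz
    simp only [Prod.mk.injEq]
    constructor <;> field_simp <;> ring
  · rintro ⟨u, v⟩ hw
    simp only [Prod.mk.injEq]
    constructor <;> field_simp <;> ring

open Finset in
private lemma aux_exists_nonsquare_shift {p : ℕ} [Fact p.Prime] (D : ZMod p)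
    (hD : ¬ IsSquare D) : ∃ s : ZMod p, ¬ IsSquare (s ^ 2 - D) := by
  by_contra hall
  push_neg at hall
  classical
  set Sq : Finset (ZMod p) := univ.filter (fun q => IsSquare q) with hSq
  have h0 : (0 : ZMod p) ∈ Sq := by simp [hSq]
  have maps : ∀ q ∈ Sq, q - D ∈ Sq.erase 0 := by
    intro q hq
    simp only [hSq, mem_filter, mem_univ, true_and] at hq
    obtain ⟨t, rfl⟩ := hq
    simp only [mem_erase, hSq, mem_filter, mem_univ, true_and]
    constructor
    · intro h
      exact hD ⟨t, by linear_combination -h⟩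
    · have := hall t
      rw [sq] at this
      exact this
  have hle := Finset.card_le_card_of_injOn _ maps
    (by intro q _ q' _ h; exact sub_left_injective h)
  have hlt := Finset.card_erase_lt_of_mem h0
  omega

private lemma aux_norm_surj {p : ℕ} [Fact p.Prime] (D : ZMod p) (hD : ¬ IsSquare D)
    (c : ZMod p) (hc : c ≠ 0) : ∃ s y : ZMod p, s ^ 2 - D * y ^ 2 = c := by
  by_cases hsq : IsSquare c
  · obtain ⟨t, rfl⟩ := hsq
    exact ⟨t, 0, by ring⟩
  · obtain ⟨s₀, hs₀⟩ := aux_exists_nonsquare_shift D hD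
    have he : s₀ ^ 2 - D ≠ 0 := by
      intro h
      exact hD ⟨s₀, by linear_combination -h⟩
    have hce : c * (s₀ ^ 2 - D) ≠ 0 := mul_ne_zero hc he
    have hsq2 : IsSquare (c * (s₀ ^ 2 - D)) := by
      by_cases hp2 : ringChar (ZMod p) = 2
      · exact FiniteField.isSquare_of_char_two hp2 _
      · have h1 : quadraticChar (ZMod p) c = -1 :=
          (quadraticChar_neg_one_iff_not_isSquare (a := c)).2 hsq
        have h2 : quadraticChar (ZMod p) (s₀ ^ 2 - D) = -1 :=
          (quadraticChar_neg_one_iff_not_isSquare).2 hs₀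
        have h3 : quadraticChar (ZMod p) (c * (s₀ ^ 2 - D)) = 1 := by
          rw [map_mul, h1, h2]; norm_num
        exact (quadraticChar_one_iff_isSquare hce).1 h3
    obtain ⟨t, ht⟩ := hsq2
    refine ⟨t * s₀ / (s₀ ^ 2 - D), t / (s₀ ^ 2 - D), ?_⟩
    rw [div_pow, div_pow, mul_div_assoc', div_sub_div_same, div_eq_iff (pow_ne_zero 2 he)]
    linear_combination -(s₀ ^ 2 - D) * ht

open Finset in
private lemma Mcard_zero {p : ℕ} [Fact p.Prime] (D : ZMod p) (hD : ¬ IsSquare D) :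
    Mcard p D 0 = 1 := by
  rw [Mcard]
  have : (univ.filter fun z : ZMod p × ZMod p => z.1 ^ 2 - D * z.2 ^ 2 = 0)
      = {((0 : ZMod p), (0 : ZMod p))} := by
    ext ⟨s, y⟩
    simp only [mem_filter, mem_univ, true_and, mem_singleton, Prod.mk.injEq]
    constructor
    · intro h
      by_cases hy : y = 0
      · subst hy
        refine ⟨?_, rfl⟩
        have : s ^ 2 = 0 := by linear_combination h
        exact pow_eq_zero_iff (by norm_num) |>.1 this
      · exfalso
        apply hD
        refine ⟨s / y, ?_⟩
        field_simp
        linear_combination -h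
    · rintro ⟨rfl, rfl⟩; ring
  rw [this, Finset.card_singleton]

open Finset in
private lemma Mcard_ne_zero {p : ℕ} [Fact p.Prime] (D : ZMod p) (hD : ¬ IsSquare D)
    (c : ZMod p) (hc : c ≠ 0) : Mcard p D c = p + 1 := by
  have hsame : ∀ d : ZMod p, d ≠ 0 → Mcard p D d = Mcard p D c := by
    intro d hd
    obtain ⟨s₁, y₁, h₁⟩ := aux_norm_surj D hD d hd
    obtain ⟨s₂, y₂, h₂⟩ := aux_norm_surj D hD c hc
    have e1 := Mcard_mul D s₁ y₁ 1 (by rw [h₁]; exact hd)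
    have e2 := Mcard_mul D s₂ y₂ 1 (by rw [h₂]; exact hc)
    rw [h₁, mul_one] at e1
    rw [h₂, mul_one] at e2
    rw [← e1, e2]
  have hsum : ∑ d : ZMod p, Mcard p D d = p * p := by
    rw [show (p * p : ℕ) = Fintype.card (ZMod p × ZMod p) by
      simp [Fintype.card_prod, ZMod.card]]
    rw [← Finset.card_univ]
    rw [Finset.card_eq_sum_card_fiberwise
      (f := fun z : ZMod p × ZMod p => z.1 ^ 2 - D * z.2 ^ 2) (t := univ)
      (fun x _ => mem_univ _)]
    rfl
  have hsplit : ∑ d : ZMod p, Mcard p D d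
      = Mcard p D 0 + ∑ d ∈ (univ : Finset (ZMod p)).erase 0, Mcard p D d := by
    rw [← Finset.add_sum_erase _ _ (mem_univ (0 : ZMod p))]
  have hconst : ∑ d ∈ (univ : Finset (ZMod p)).erase 0, Mcard p D d
      = (p - 1) * Mcard p D c := by
    rw [Finset.sum_congr rfl (fun d hd => hsame d (by simpa using (mem_erase.1 hd).1))]
    rw [Finset.sum_const, Finset.card_erase_of_mem (mem_univ 0), Finset.card_univ, ZMod.card]
    ring
  rw [hsplit, Mcard_zero D hD, hconst] at hsum
  have hp2 : 2 ≤ p := (Fact.out : p.Prime).two_le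
  have hz : ((1 : ℕ) : ℤ) + ((p : ℤ) - 1) * (Mcard p D c : ℤ) = (p : ℤ) * p := by
    have := congrArg (Nat.cast : ℕ → ℤ) hsum
    push_cast [Nat.cast_sub (by omega : 1 ≤ p)] at this
    push_cast
    linarith [this]
  have hkey : ((p : ℤ) - 1) * (Mcard p D c : ℤ)
      = ((p : ℤ) - 1) * ((p : ℤ) + 1) := by linear_combination hz
  have hpne : ((p : ℤ) - 1) ≠ 0 := by
    have : (2 : ℤ) ≤ (p : ℤ) := by exact_mod_cast hp2
    linarith
  have := mul_left_cancel₀ hpne hkey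
  exact_mod_cast this

open Finset in
private lemma aux_conic_par {p : ℕ} [Fact p.Prime] (hp3 : 3 < p) (a : ZMod p)
    (hpar : 9 * a ^ 2 - 4 = 0) :
    (univ.filter fun z : ZMod p × ZMod p =>
        z.1 ^ 2 + z.2 ^ 2 + a ^ 2 = 3 * a * z.1 * z.2).card
    = (univ.filter fun u : ZMod p => u ^ 2 = -(2 * a) ^ 2).card * p := by
  have h2 := aux_two_ne (p := p) hp3
  have key : (univ.filter fun z : ZMod p × ZMod p =>
        z.1 ^ 2 + z.2 ^ 2 + a ^ 2 = 3 * a * z.1 * z.2).card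
      = (univ.filter fun z : ZMod p × ZMod p => z.1 ^ 2 = -(2 * a) ^ 2).card := by
    apply Finset.card_nbij'
      (i := fun z : ZMod p × ZMod p => (2 * z.1 - 3 * a * z.2, z.2))
      (j := fun w : ZMod p × ZMod p => ((w.1 + 3 * a * w.2) / 2, w.2))
    · rintro ⟨x, y⟩ hz
      simp only [mem_coe, mem_filter, mem_univ, true_and] at hz ⊢
      linear_combination 4 * hz + y ^ 2 * hpar
    · rintro ⟨u, y⟩ hw
      simp only [mem_coe, mem_filter, mem_univ, true_and] at hw ⊢
      field_simp
      linear_combination hw - y ^ 2 * hpar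
    · rintro ⟨x, y⟩ hz
      simp only [Prod.mk.injEq]
      refine ⟨?_, trivial⟩
      field_simp
      ring
    · rintro ⟨u, y⟩ hw
      simp only [Prod.mk.injEq]
      refine ⟨?_, trivial⟩
      field_simp
      ring
  rw [key]
  have : (univ.filter fun z : ZMod p × ZMod p => z.1 ^ 2 = -(2 * a) ^ 2)
      = (univ.filter fun u : ZMod p => u ^ 2 = -(2 * a) ^ 2) ×ˢ univ := by
    ext ⟨u, y⟩
    simp [Finset.mem_product]
  rw [this, Finset.card_product, Finset.card_univ, ZMod.card]

open Finset in
private lemma aux_conic_hyp {p : ℕ} [Fact p.Prime] (hp3 : 3 < p) (a d : ZMod p)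
    (hd : d ≠ 0) (hdd : d ^ 2 = 9 * a ^ 2 - 4) :
    (univ.filter fun z : ZMod p × ZMod p =>
        z.1 ^ 2 + z.2 ^ 2 + a ^ 2 = 3 * a * z.1 * z.2).card
    = (univ.filter fun w : ZMod p × ZMod p => w.1 * w.2 = -(4 * a ^ 2)).card := by
  have h2 := aux_two_ne (p := p) hp3
  have h4 := aux_four_ne (p := p) hp3
  apply Finset.card_nbij'
    (i := fun z : ZMod p × ZMod p =>
      (2 * z.1 - (3 * a + d) * z.2, 2 * z.1 - (3 * a - d) * z.2))
    (j := fun w : ZMod p × ZMod p =>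
      ((w.1 + w.2 + 6 * a * ((w.2 - w.1) / (2 * d))) / 4, (w.2 - w.1) / (2 * d)))
  · rintro ⟨x, y⟩ hz
    simp only [mem_coe, mem_filter, mem_univ, true_and] at hz ⊢
    linear_combination 4 * hz - y ^ 2 * hdd
  · rintro ⟨u, v⟩ hw
    simp only [mem_coe, mem_filter, mem_univ, true_and] at hw ⊢
    set Y := (v - u) / (2 * d) with hY
    have hu : 2 * ((u + v + 6 * a * Y) / 4) - (3 * a + d) * Y = u := by
      rw [hY]; field_simp; ring
    have hv : 2 * ((u + v + 6 * a * Y) / 4) - (3 * a - d) * Y = v := by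
      rw [hY]; field_simp; ring
    set X := (u + v + 6 * a * Y) / 4 with hX
    clear_value X Y
    have key : 4 * (X ^ 2 + Y ^ 2 + a ^ 2 - 3 * a * X * Y)
        = (u * v + 4 * a ^ 2) + Y ^ 2 * (d ^ 2 - 9 * a ^ 2 + 4) := by
      linear_combination (2 * X - (3 * a - d) * Y) * hu + u * hv
    apply mul_left_cancel₀ h4
    linear_combination key + hw + Y ^ 2 * hdd
  · rintro ⟨x, y⟩ hz
    simp only [Prod.mk.injEq]
    constructor
    · field_simp
      ring
    · field_simp
      ring
  · rintro ⟨u, v⟩ hw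
    simp only [Prod.mk.injEq]
    constructor
    · field_simp
      ring
    · field_simp
      ring

open Finset in
private lemma aux_conic_ell {p : ℕ} [Fact p.Prime] (hp3 : 3 < p) (a : ZMod p) :
    (univ.filter fun z : ZMod p × ZMod p =>
        z.1 ^ 2 + z.2 ^ 2 + a ^ 2 = 3 * a * z.1 * z.2).card
    = (univ.filter fun z : ZMod p × ZMod p =>
        z.1 ^ 2 - (9 * a ^ 2 - 4) * z.2 ^ 2 = -(4 * a ^ 2)).card := by
  have h2 := aux_two_ne (p := p) hp3
  apply Finset.card_nbij'
    (i := fun z : ZMod p × ZMod p => (2 * z.1 - 3 * a * z.2, z.2))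
    (j := fun w : ZMod p × ZMod p => ((w.1 + 3 * a * w.2) / 2, w.2))
  · rintro ⟨x, y⟩ hz
    simp only [mem_coe, mem_filter, mem_univ, true_and] at hz ⊢
    linear_combination 4 * hz
  · rintro ⟨u, y⟩ hw
    simp only [mem_coe, mem_filter, mem_univ, true_and] at hw ⊢
    have h4 : (4 : ZMod p) ≠ 0 := aux_four_ne (p := p) hp3
    apply mul_left_cancel₀ h4
    have hx : 2 * ((u + 3 * a * y) / 2) = u + 3 * a * y := by field_simp
    set X := (u + 3 * a * y) / 2 with hX
    clear_value X
    linear_combination (2 * X + u - 3 * a * y) * hx + hw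
  · rintro ⟨x, y⟩ hz
    simp only [Prod.mk.injEq]
    refine ⟨?_, trivial⟩
    field_simp
    ring
  · rintro ⟨u, y⟩ hw
    simp only [Prod.mk.injEq]
    refine ⟨?_, trivial⟩
    field_simp
    ring

open Finset in
private lemma aux_Ci_card {p : ℕ} [Fact p.Prime] (i : Fin 3) (a : ZMod p) (ha : a ≠ 0) :
    (Ci p i a).ncard = (univ.filter fun z : ZMod p × ZMod p =>
        z.1 ^ 2 + z.2 ^ 2 + a ^ 2 = 3 * a * z.1 * z.2).card := by
  set S := (univ.filter fun z : ZMod p × ZMod p =>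
      z.1 ^ 2 + z.2 ^ 2 + a ^ 2 = 3 * a * z.1 * z.2) with hS
  have hmem : ∀ u v : ZMod p, ((u, v) ∈ (↑S : Set (ZMod p × ZMod p)))
      ↔ u ^ 2 + v ^ 2 + a ^ 2 = 3 * a * u * v := by
    intro u v
    simp [hS]
  have hmain : ∀ (e : ZMod p × ZMod p → ZMod p × ZMod p × ZMod p),
      Function.Injective e → Ci p i a = e '' ↑S → (Ci p i a).ncard = S.card := by
    intro e he hE
    rw [hE, Set.ncard_image_of_injective _ he, Set.ncard_coe_finset]
  fin_cases i
  · apply hmain (fun z => (a, z.1, z.2))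
    · intro z w h
      obtain ⟨z1, z2⟩ := z; obtain ⟨w1, w2⟩ := w
      simpa [Prod.ext_iff] using h
    · ext w
      constructor
      · rintro ⟨⟨hm, hnz⟩, hc⟩
        have hc' : w.1 = a := hc
        refine ⟨(w.2.1, w.2.2), ?_, ?_⟩
        · rw [hmem]
          have hm' : w.1 ^ 2 + w.2.1 ^ 2 + w.2.2 ^ 2 = 3 * w.1 * w.2.1 * w.2.2 := hm
          rw [hc'] at hm'
          linear_combination hm'
        · rw [← hc']
      · rintro ⟨⟨u, v⟩, hm, rfl⟩
        rw [hmem] at hm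
        refine ⟨⟨?_, ?_⟩, ?_⟩
        · show a ^ 2 + u ^ 2 + v ^ 2 = 3 * a * u * v
          linear_combination hm
        · intro h; exact ha (congrArg Prod.fst h)
        · rfl
  · apply hmain (fun z => (z.1, a, z.2))
    · intro z w h
      obtain ⟨z1, z2⟩ := z; obtain ⟨w1, w2⟩ := w
      simpa [Prod.ext_iff] using h
    · ext w
      constructor
      · rintro ⟨⟨hm, hnz⟩, hc⟩
        have hc' : w.2.1 = a := hc
        refine ⟨(w.1, w.2.2), ?_, ?_⟩
        · rw [hmem]
          have hm' : w.1 ^ 2 + w.2.1 ^ 2 + w.2.2 ^ 2 = 3 * w.1 * w.2.1 * w.2.2 := hm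
          rw [hc'] at hm'
          linear_combination hm'
        · rw [← hc']
      · rintro ⟨⟨u, v⟩, hm, rfl⟩
        rw [hmem] at hm
        refine ⟨⟨?_, ?_⟩, ?_⟩
        · show u ^ 2 + a ^ 2 + v ^ 2 = 3 * u * a * v
          linear_combination hm
        · intro h; exact ha (congrArg (fun t => t.2.1) h)
        · rfl
  · apply hmain (fun z => (z.1, z.2, a))
    · intro z w h
      obtain ⟨z1, z2⟩ := z; obtain ⟨w1, w2⟩ := w
      simpa [Prod.ext_iff] using h
    · ext w
      constructor
      · rintro ⟨⟨hm, hnz⟩, hc⟩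
        have hc' : w.2.2 = a := hc
        refine ⟨(w.1, w.2.1), ?_, ?_⟩
        · rw [hmem]
          have hm' : w.1 ^ 2 + w.2.1 ^ 2 + w.2.2 ^ 2 = 3 * w.1 * w.2.1 * w.2.2 := hm
          rw [hc'] at hm'
          linear_combination hm'
        · rw [← hc']
      · rintro ⟨⟨u, v⟩, hm, rfl⟩
        rw [hmem] at hm
        refine ⟨⟨?_, ?_⟩, ?_⟩
        · show u ^ 2 + v ^ 2 + a ^ 2 = 3 * u * v * a
          linear_combination hm
        · intro h; exact ha (congrArg (fun t => t.2.2) h)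
        · rfl

theorem stmt_11 (p : ℕ) (hp : p.Prime) (hp3 : 3 < p) (i : Fin 3)
    (a : ZMod p) (ha : a ≠ 0) :
    (9 * a ^ 2 - 4 = 0 →
      (p % 4 = 3 → (Ci p i a).ncard = 0) ∧ (p % 4 = 1 → (Ci p i a).ncard = 2 * p)) ∧
    (¬ IsSquare (9 * a ^ 2 - 4) → (Ci p i a).ncard = p + 1) ∧
    (9 * a ^ 2 - 4 ≠ 0 ∧ IsSquare (9 * a ^ 2 - 4) → (Ci p i a).ncard = p - 1) := by
  haveI : Fact p.Prime := ⟨hp⟩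
  have hCi := aux_Ci_card (p := p) i a ha
  have h4a : -(4 * a ^ 2) ≠ (0 : ZMod p) := by
    apply neg_ne_zero.2
    exact mul_ne_zero (aux_four_ne (p := p) hp3) (pow_ne_zero 2 ha)
  refine ⟨?_, ?_, ?_⟩
  · intro hpar
    constructor
    · intro hmod
      rw [hCi, aux_conic_par hp3 a hpar]
      have hns : ¬ IsSquare (-(2 * a) ^ 2 : ZMod p) := by
        intro hsq
        obtain ⟨r, hr⟩ := hsq
        have h2a : (2 * a : ZMod p) ≠ 0 := mul_ne_zero (aux_two_ne (p := p) hp3) ha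
        have : IsSquare (-1 : ZMod p) := by
          refine ⟨r / (2 * a), ?_⟩
          rw [div_mul_div_comm, eq_div_iff (mul_ne_zero h2a h2a)]
          linear_combination hr
        exact (ZMod.exists_sq_eq_neg_one_iff.1 this) hmod
      rw [aux_card_sqrt_nonsquare _ hns, zero_mul]
    · intro hmod
      rw [hCi, aux_conic_par hp3 a hpar]
      have hsq : IsSquare (-1 : ZMod p) := ZMod.exists_sq_eq_neg_one_iff.2 (by omega)
      obtain ⟨s, hs⟩ := hsq
      have hs0 : s ≠ 0 := by
        rintro rfl
        rw [mul_zero] at hs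
        exact one_ne_zero (neg_eq_zero.1 hs)
      have hb : s * (2 * a) ≠ 0 :=
        mul_ne_zero hs0 (mul_ne_zero (aux_two_ne (p := p) hp3) ha)
      have heq : (-(2 * a) ^ 2 : ZMod p) = (s * (2 * a)) ^ 2 := by
        linear_combination 4 * a ^ 2 * hs
      rw [heq, aux_card_sqrt_sq hp3 _ hb]
  · intro hell
    rw [hCi, aux_conic_ell hp3 a]
    exact Mcard_ne_zero _ hell _ h4a
  · rintro ⟨hne, hsq⟩
    obtain ⟨d, hd2⟩ := hsq
    have hd : d ≠ 0 := by
      rintro rfl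
      rw [mul_zero] at hd2
      exact hne hd2
    have hdd : d ^ 2 = 9 * a ^ 2 - 4 := by rw [pow_two]; exact hd2.symm
    rw [hCi, aux_conic_hyp hp3 a d hd hdd, aux_card_hyperbola _ h4a]

end Markoff
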